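/- Let C ⊆ F_q^n be a linear code, m ≥ 2, and M := (1/2)(m−2)(m+3). Then ρ_r(T_m^1, C^{⊗m}) ≥ (1/12^{m−2}) · ρ_r(T_2^1, C^{⊗2}) · δ(C)^M, where δ(C) is the normalized minimum distance of C. -/

import Mathlib

noncomputable section

open Polynomial

/-- Normalized Hamming weight. -/
def normWt {ι F : Type*} [Fintype ι] [Zero F] (x : ι → F) : ℝ :=
  (Nat.card {p : ι // x p ≠ 0} : ℝ) / (Fintype.card ι : ℝ)

/-- Normalized Hamming distance from a word to a set of words. -/
def distTo {ι F : Type*} [Fintype ι] [AddGroup F] (x : ι → F) (S : Set (ι → F)) : ℝ :=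
  sInf ((fun c => normWt (x - c)) '' S)

/-- Normalized minimum distance of a code. -/
def minDist {ι F : Type*} [Fintype ι] [Zero F] (S : Set (ι → F)) : ℝ :=
  sInf (normWt '' (S \ {0}))

/-- Restriction of a word on a grid to the axis-`i` line through `y`. -/
def lineRestrict {F : Type*} {m : ℕ} {n : Fin m → ℕ}
    (x : (∀ j, Fin (n j)) → F) (i : Fin m) (y : ∀ j, Fin (n j)) : Fin (n i) → F :=
  fun s => x (Function.update y i s)

/-- `‖x‖_i`: the fraction of axis-`i` parallel lines on which `x` is nonzero. -/
def lineWt {F : Type*} [Zero F] {m : ℕ} {n : Fin m → ℕ}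
    (x : (∀ j, Fin (n j)) → F) (i : Fin m) : ℝ :=
  (Nat.card {y : ∀ j, Fin (n j) // lineRestrict x i y ≠ 0} : ℝ) /
    (Fintype.card (∀ j, Fin (n j)) : ℝ)

/-- `C^{(i)}`: words all of whose axis-`i` lines belong to `C i`. -/
def axisCode {F : Type*} {m : ℕ} {n : Fin m → ℕ}
    (C : ∀ i, Set (Fin (n i) → F)) (i : Fin m) : Set ((∀ j, Fin (n j)) → F) :=
  {x | ∀ y, lineRestrict x i y ∈ C i}

/-- Tensor product code `C₁ ⊗ ⋯ ⊗ C_m`. -/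
def prodCode {F : Type*} {m : ℕ} {n : Fin m → ℕ}
    (C : ∀ i, Set (Fin (n i) → F)) : Set ((∀ j, Fin (n j)) → F) :=
  ⋂ i, axisCode C i

/-- Dual code w.r.t. the standard bilinear form. -/
def dualCode {ι F : Type*} [Fintype ι] [CommRing F] (S : Set (ι → F)) : Set (ι → F) :=
  {x | ∀ c ∈ S, ∑ p, x p * c p = 0}

/-- `C₁ ⊞ ⋯ ⊞ C_m := (C₁^⊥ ⊗ ⋯ ⊗ C_m^⊥)^⊥`. -/
def boxCode {F : Type*} [CommRing F] {m : ℕ} {n : Fin m → ℕ}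
    (C : ∀ i, Set (Fin (n i) → F)) : Set ((∀ j, Fin (n j)) → F) :=
  dualCode (prodCode (fun i => dualCode (C i)))

/-- `ρ`-product-expansion of a collection of codes. -/
def productExpanding {F : Type*} [Field F] {m : ℕ} {n : Fin m → ℕ}
    (C : ∀ i, Set (Fin (n i) → F)) (ρ : ℝ) : Prop :=
  ∀ c ∈ boxCode C, ∃ a : Fin m → ((∀ j, Fin (n j)) → F),
    (∀ i, a i ∈ axisCode C i) ∧ c = ∑ i, a i ∧
      ρ * ∑ i, lineWt (a i) i ≤ normWt c

/-- The product-expansion constant `ρ(𝒞)`. -/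
def prodExpConst {F : Type*} [Field F] {m : ℕ} {n : Fin m → ℕ}
    (C : ∀ i, Set (Fin (n i) → F)) : ℝ :=
  sSup {ρ : ℝ | productExpanding C ρ}

/-- Expected distance under the axis-parallel line test `T_m^1`. -/
def lineTestE {F : Type*} [Field F] {m : ℕ} {n : Fin m → ℕ}
    (C : ∀ i, Set (Fin (n i) → F)) (x : (∀ j, Fin (n j)) → F) : ℝ :=
  (∑ i, (∑ y : ∀ j, Fin (n j), distTo (lineRestrict x i y) (C i)) /
      (Fintype.card (∀ j, Fin (n j)) : ℝ)) / (m : ℝ)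

/-- Robustness constant `ρ_r(T_m^1, ⊗𝒞)` of the axis-parallel line test. -/
def lineRobustConst {F : Type*} [Field F] {m : ℕ} {n : Fin m → ℕ}
    (C : ∀ i, Set (Fin (n i) → F)) : ℝ :=
  sSup {α : ℝ | ∀ x, α * distTo x (prodCode C) ≤ lineTestE C x}

/-- Agreement-testability constant `ρ_a(⊗𝒞)`. -/
def agreeConst {F : Type*} [Field F] {m : ℕ} {n : Fin m → ℕ}
    (C : ∀ i, Set (Fin (n i) → F)) : ℝ :=
  sSup {α : ℝ | ∀ c : Fin m → ((∀ j, Fin (n j)) → F),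
    (∀ i, c i ∈ axisCode C i) → ∃ z ∈ prodCode C,
      α * ((∑ i, lineWt (c i - z) i) / (m : ℝ)) ≤
        (∑ i, ∑ j, normWt (c i - c j)) / ((m : ℝ) ^ 2)}

/-- `C^{⊗k}` on the grid `[n]^k`. -/
def tensorPow {F : Type*} {n : ℕ} (C : Set (Fin n → F)) (k : ℕ) :
    Set ((Fin k → Fin n) → F) :=
  {x | ∀ (i : Fin k) (y : Fin k → Fin n), (fun s => x (Function.update y i s)) ∈ C}

/-- Restriction of a word to the axis-parallel `k`-flat determined by the axes
`e : Fin k ↪ Fin m` and base point `y`. -/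
def flatRestrict {F : Type*} {n m k : ℕ} (x : (Fin m → Fin n) → F)
    (e : Fin k ↪ Fin m) (y : Fin m → Fin n) : (Fin k → Fin n) → F :=
  fun z => x (fun j => if h : ∃ l, e l = j then z h.choose else y j)

/-- Expected distance under the axis-parallel `k`-flat test `T_m^k` for `C^{⊗m}`. -/
def flatTestE {F : Type*} [Field F] {n : ℕ} (C : Set (Fin n → F)) (m k : ℕ)
    (x : (Fin m → Fin n) → F) : ℝ :=
  (∑ e : Fin k ↪ Fin m, ∑ y : Fin m → Fin n,
      distTo (flatRestrict x e y) (tensorPow C k)) /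
    ((Fintype.card (Fin k ↪ Fin m) : ℝ) * (Fintype.card (Fin m → Fin n) : ℝ))

/-- Robustness constant `ρ_r(T_m^k, C^{⊗m})`. -/
def flatRobustConst {F : Type*} [Field F] {n : ℕ} (C : Set (Fin n → F)) (m k : ℕ) : ℝ :=
  sSup {α : ℝ | ∀ x : (Fin m → Fin n) → F,
    α * distTo x (tensorPow C m) ≤ flatTestE C m k x}

/-- The polynomial `Σ aᵢ xⁱ` of a word of length `n`. -/
def wordPoly {F : Type*} [CommSemiring F] {n : ℕ} (a : Fin n → F) : Polynomial F :=
  ∑ i, Polynomial.C (a i) * Polynomial.X ^ (i : ℕ)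

/-- The cyclic code of length `n` with check polynomial `p`. -/
def cyclicCode {F : Type*} [CommRing F] (n : ℕ) (p : Polynomial F) : Set (Fin n → F) :=
  {a | (Polynomial.X ^ n - 1) ∣ p * wordPoly a}

/-- Check polynomial `(x-1)(x-ω)⋯(x-ω^{k-1})` of the primitive Reed–Solomon code. -/
def rsCheck {F : Type*} [CommRing F] (k : ℕ) (ω : F) : Polynomial F :=
  ∏ i ∈ Finset.range k, (Polynomial.X - Polynomial.C (ω ^ i))

/-- The primitive Reed–Solomon evaluation code of degree `< k` at the nonzero points. -/
def evalRS (F : Type*) [Field F] [Fintype F] (k : ℕ) : Set (Fˣ → F) :=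
  {c | ∃ p : Polynomial F, p.degree < (k : ℕ) ∧ ∀ a : Fˣ, c a = p.eval (a : F)}

/-- Words on `ι₁ × ι₂` all of whose columns lie in `S`. -/
def colCode {ι₁ ι₂ F : Type*} (S : Set (ι₁ → F)) : Set (ι₁ × ι₂ → F) :=
  {x | ∀ j, (fun i => x (i, j)) ∈ S}

/-- Words on `ι₁ × ι₂` all of whose rows lie in `S`. -/
def rowCode {ι₁ ι₂ F : Type*} (S : Set (ι₂ → F)) : Set (ι₁ × ι₂ → F) :=
  {x | ∀ i, (fun j => x (i, j)) ∈ S}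

/-- The multivariate polynomial `Σ_y x_y ∏ᵢ Xᵢ^{yᵢ}` of a word on the grid `[n]^m`. -/
def wordPolyMv {F : Type*} [CommSemiring F] {m n : ℕ} (x : (Fin m → Fin n) → F) :
    MvPolynomial (Fin m) F :=
  ∑ y : Fin m → Fin n, MvPolynomial.C (x y) * ∏ i, MvPolynomial.X i ^ ((y i : ℕ))

namespace Stmt7

lemma normWt_nonneg {ι F : Type*} [Fintype ι] [Zero F] (x : ι → F) : 0 ≤ normWt x :=
  div_nonneg (Nat.cast_nonneg _) (Nat.cast_nonneg _)

lemma normWt_zero {ι F : Type*} [Fintype ι] [Zero F] : normWt (0 : ι → F) = 0 := by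
  have : IsEmpty {p : ι // (0 : ι → F) p ≠ 0} := ⟨fun ⟨p, hp⟩ => hp rfl⟩
  rw [normWt, Nat.card_of_isEmpty, Nat.cast_zero, zero_div]

lemma distTo_nonneg {ι F : Type*} [Fintype ι] [AddGroup F] (x : ι → F) (S : Set (ι → F)) :
    0 ≤ distTo x S :=
  Real.sInf_nonneg (by rintro _ ⟨c, _, rfl⟩; exact normWt_nonneg _)

lemma minDist_nonneg {ι F : Type*} [Fintype ι] [Zero F] (S : Set (ι → F)) :
    0 ≤ minDist S :=
  Real.sInf_nonneg (by rintro _ ⟨c, _, rfl⟩; exact normWt_nonneg _)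

lemma distTo_le {ι F : Type*} [Fintype ι] [AddGroup F] (x : ι → F) {S : Set (ι → F)}
    {c : ι → F} (hc : c ∈ S) : distTo x S ≤ normWt (x - c) :=
  csInf_le ⟨0, by rintro _ ⟨d, _, rfl⟩; exact normWt_nonneg _⟩ ⟨c, hc, rfl⟩

lemma mem_of_distTo_eq_zero {ι F : Type*} [Fintype ι] [Finite F] [AddGroup F]
    {x : ι → F} {S : Set (ι → F)} (hι : 0 < Fintype.card ι) (hS : S.Nonempty)
    (h : distTo x S = 0) : x ∈ S := by
  have hfin : ((fun c => normWt (x - c)) '' S).Finite := (S.toFinite.image _)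
  have hne : ((fun c => normWt (x - c)) '' S).Nonempty := hS.image _
  have hmem := hne.csInf_mem hfin
  rw [← distTo, h] at hmem
  obtain ⟨c, hc, hc0⟩ := hmem
  have hval : normWt (x - c) = 0 := hc0
  have : x - c = 0 := by
    by_contra hne0
    obtain ⟨p, hp⟩ := Function.ne_iff.mp hne0
    have hnz : Nat.card {p : ι // (x - c) p ≠ 0} ≠ 0 :=
      Nat.card_ne_zero.mpr ⟨⟨⟨p, by simpa using hp⟩⟩, inferInstance⟩
    unfold normWt at hval
    rw [_root_.div_eq_zero_iff] at hval
    rcases hval with h1 | h1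
    · exact hnz (by exact_mod_cast h1)
    · exact absurd h1 (by positivity)
  have : x = c := by rwa [sub_eq_zero] at this
  rwa [this]

lemma distTo_pos {ι F : Type*} [Fintype ι] [Finite F] [AddGroup F]
    {x : ι → F} {S : Set (ι → F)} (hι : 0 < Fintype.card ι) (hS : S.Nonempty)
    (hx : x ∉ S) : 0 < distTo x S :=
  (distTo_nonneg x S).lt_of_ne fun h => hx (mem_of_distTo_eq_zero hι hS h.symm)

lemma flatTestE_nonneg {F : Type*} [Field F] {n : ℕ} (C : Set (Fin n → F)) (m k : ℕ)
    (x : (Fin m → Fin n) → F) : 0 ≤ flatTestE C m k x := by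
  apply div_nonneg
  · exact Finset.sum_nonneg fun e _ => Finset.sum_nonneg fun y _ => distTo_nonneg _ _
  · positivity

lemma zero_mem_tensorPow {F : Type*} {n : ℕ} {C : Set (Fin n → F)} [Zero F]
    (h0 : (0 : Fin n → F) ∈ C) (k : ℕ) : (0 : (Fin k → Fin n) → F) ∈ tensorPow C k :=
  fun _ _ => h0

lemma robust_spec {F : Type*} [Field F] [Fintype F] {n : ℕ} (C : Set (Fin n → F))
    (m k : ℕ) (x : (Fin m → Fin n) → F) :
    flatRobustConst C m k * distTo x (tensorPow C m) ≤ flatTestE C m k x := by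
  have hd : 0 ≤ distTo x (tensorPow C m) := distTo_nonneg _ _
  have hE : 0 ≤ flatTestE C m k x := flatTestE_nonneg _ _ _ _
  rcases hd.eq_or_lt with h | h
  · rw [← h, mul_zero]; exact hE
  · have hle : flatRobustConst C m k ≤ flatTestE C m k x / distTo x (tensorPow C m) :=
      Real.sSup_le (fun α hα => (le_div_iff₀ h).mpr (hα x)) (div_nonneg hE hd)
    calc flatRobustConst C m k * distTo x (tensorPow C m)
        ≤ (flatTestE C m k x / distTo x (tensorPow C m)) * distTo x (tensorPow C m) :=
          mul_le_mul_of_nonneg_right hle hd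
      _ = flatTestE C m k x := div_mul_cancel₀ _ (ne_of_gt h)

lemma robust_nonneg {F : Type*} [Field F] [Fintype F] {n : ℕ} (C : Set (Fin n → F))
    (m k : ℕ) : 0 ≤ flatRobustConst C m k :=
  Real.sSup_nonneg' ⟨0, fun x => by
    rw [zero_mul]; exact flatTestE_nonneg _ _ _ _, le_rfl⟩


def merge {n m k : ℕ} (e : Fin k ↪ Fin m) (Y : Fin m → Fin n) (z : Fin k → Fin n) :
    Fin m → Fin n :=
  fun j => if h : ∃ l, e l = j then z h.choose else Y j

lemma flatRestrict_comp {F : Type*} {n m k k' : ℕ} (x : (Fin m → Fin n) → F)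
    (e : Fin k ↪ Fin m) (f : Fin k' ↪ Fin k) (Y : Fin m → Fin n) (z : Fin k → Fin n) :
    flatRestrict (flatRestrict x e Y) f z = flatRestrict x (f.trans e) (merge e Y z) := by
  funext u
  simp only [flatRestrict, merge]
  congr 1
  funext j
  by_cases h1 : ∃ l, e l = j
  · rw [dif_pos h1]
    by_cases h2 : ∃ t, f t = h1.choose
    · have h3 : ∃ t, (f.trans e) t = j :=
        ⟨h2.choose, by
          simp only [Function.Embedding.trans_apply]
          rw [h2.choose_spec]; exact h1.choose_spec⟩
      rw [dif_pos h2, dif_pos h3]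
      congr 1
      have h5 : e (f h3.choose) = j := h3.choose_spec
      have h4 : f h3.choose = h1.choose := e.injective (h5.trans h1.choose_spec.symm)
      exact f.injective (h2.choose_spec.trans h4.symm)
    · have h3 : ¬ ∃ t, (f.trans e) t = j := by
        rintro ⟨t, ht⟩
        exact h2 ⟨t, e.injective ((show e (f t) = j from ht).trans h1.choose_spec.symm)⟩
      rw [dif_neg h2, dif_neg h3, dif_pos h1]
  · have h3 : ¬ ∃ t, (f.trans e) t = j := fun ⟨t, ht⟩ => h1 ⟨f t, ht⟩
    rw [dif_neg h1, dif_neg h3, dif_neg h1]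

def mergeEquiv {n m k : ℕ} (e : Fin k ↪ Fin m) :
    ((Fin m → Fin n) × (Fin k → Fin n)) ≃ ((Fin m → Fin n) × (Fin k → Fin n)) where
  toFun p := (merge e p.1 p.2, fun l => p.1 (e l))
  invFun q := (fun j => if h : ∃ l, e l = j then q.2 h.choose else q.1 j, fun l => q.1 (e l))
  left_inv p := by
    obtain ⟨Y, z⟩ := p
    refine Prod.ext (funext fun j => ?_) (funext fun l => ?_)
    · dsimp only [merge]
      by_cases h : ∃ l, e l = j
      · rw [dif_pos h]; exact congrArg Y h.choose_spec
      · rw [dif_neg h, dif_neg h]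
    · dsimp only [merge]
      have h : ∃ l', e l' = e l := ⟨l, rfl⟩
      rw [dif_pos h]
      exact congrArg z (e.injective h.choose_spec)
  right_inv q := by
    obtain ⟨W, w⟩ := q
    refine Prod.ext (funext fun j => ?_) (funext fun l => ?_)
    · dsimp only [merge]
      by_cases h : ∃ l, e l = j
      · rw [dif_pos h]; exact congrArg W h.choose_spec
      · rw [dif_neg h, dif_neg h]
    · dsimp only
      have h : ∃ l', e l' = e l := ⟨l, rfl⟩
      rw [dif_pos h]
      exact congrArg w (e.injective h.choose_spec)

set_option maxHeartbeats 1000000 in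
lemma sum_merge {n m k : ℕ} (e : Fin k ↪ Fin m) (g : (Fin m → Fin n) → ℝ) :
    ∑ Y : Fin m → Fin n, ∑ z : Fin k → Fin n, g (merge e Y z)
      = (Fintype.card (Fin k → Fin n) : ℝ) * ∑ Y : Fin m → Fin n, g Y := by
  calc ∑ Y : Fin m → Fin n, ∑ z : Fin k → Fin n, g (merge e Y z)
      = ∑ p : (Fin m → Fin n) × (Fin k → Fin n), g (merge e p.1 p.2) :=
        (Fintype.sum_prod_type (f := fun p => g (merge e p.1 p.2))).symm
    _ = ∑ q : (Fin m → Fin n) × (Fin k → Fin n), g q.1 :=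
        Fintype.sum_equiv (mergeEquiv e) _ _ (fun p => rfl)
    _ = ∑ Y : Fin m → Fin n, ∑ _z : Fin k → Fin n, g Y := Fintype.sum_prod_type (f := fun q => g q.1)
    _ = (Fintype.card (Fin k → Fin n) : ℝ) * ∑ Y : Fin m → Fin n, g Y := by
        simp [Finset.sum_const, Finset.card_univ, nsmul_eq_mul, Finset.mul_sum]


def castEmb {a b : ℕ} (h : a ≤ b) : Fin a ↪ Fin b :=
  ⟨Fin.castLE h, Fin.castLE_injective h⟩

open Finset in
lemma sum_fiber_card {m k : ℕ} (e₁ e₁' : Fin 1 ↪ Fin m) :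
    (Finset.univ.filter
      (fun p : (Fin k ↪ Fin m) × (Fin 1 ↪ Fin k) => p.2.trans p.1 = e₁)).card =
    (Finset.univ.filter
      (fun p : (Fin k ↪ Fin m) × (Fin 1 ↪ Fin k) => p.2.trans p.1 = e₁')).card := by
  classical
  set σ := Equiv.swap (e₁ 0) (e₁' 0) with hσ
  have key : ∀ (a b : Fin 1 ↪ Fin m) (p : (Fin k ↪ Fin m) × (Fin 1 ↪ Fin k)),
      σ (a 0) = b 0 → p.2.trans p.1 = a → p.2.trans (p.1.trans σ.toEmbedding) = b := by
    intro a b p hab hp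
    have : p.2.trans (p.1.trans σ.toEmbedding) = (p.2.trans p.1).trans σ.toEmbedding := rfl
    rw [this, hp]
    apply Function.Embedding.ext
    intro t
    have ht : t = 0 := Subsingleton.elim t 0
    subst ht
    simpa using hab
  apply Finset.card_nbij' (i := fun p => (p.1.trans σ.toEmbedding, p.2))
    (j := fun p => (p.1.trans σ.toEmbedding, p.2))
  · intro p hp
    simp only [Finset.mem_coe, Finset.mem_filter, Finset.mem_univ, true_and] at hp ⊢
    exact key e₁ e₁' p (Equiv.swap_apply_left _ _) hp
  · intro p hp
    simp only [Finset.mem_coe, Finset.mem_filter, Finset.mem_univ, true_and] at hp ⊢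
    exact key e₁' e₁ p (Equiv.swap_apply_right _ _) hp
  · intro p _
    refine Prod.ext ?_ rfl
    apply Function.Embedding.ext
    intro l
    exact Equiv.swap_apply_self _ _ _
  · intro p _
    refine Prod.ext ?_ rfl
    apply Function.Embedding.ext
    intro l
    exact Equiv.swap_apply_self _ _ _

lemma sum_trans {m k : ℕ} (h : (Fin 1 ↪ Fin m) → ℝ) (ee : Fin 1 ↪ Fin m) :
    ∑ e : Fin k ↪ Fin m, ∑ f : Fin 1 ↪ Fin k, h (f.trans e)
      = ((Finset.univ.filter
          (fun p : (Fin k ↪ Fin m) × (Fin 1 ↪ Fin k) => p.2.trans p.1 = ee)).card : ℝ) *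
          ∑ e₁ : Fin 1 ↪ Fin m, h e₁ := by
  classical
  have h0 : ∑ e : Fin k ↪ Fin m, ∑ f : Fin 1 ↪ Fin k, h (f.trans e)
      = ∑ p : (Fin k ↪ Fin m) × (Fin 1 ↪ Fin k), h (p.2.trans p.1) :=
    (Fintype.sum_prod_type (f := fun p : (Fin k ↪ Fin m) × (Fin 1 ↪ Fin k) =>
      h (p.2.trans p.1))).symm
  rw [h0]
  rw [← Finset.sum_fiberwise_of_maps_to'
    (g := fun p : (Fin k ↪ Fin m) × (Fin 1 ↪ Fin k) => p.2.trans p.1)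
    (fun p _ => Finset.mem_univ _) (f := h)]
  rw [Finset.mul_sum]
  apply Finset.sum_congr rfl
  intro e₁ _
  rw [Finset.sum_const, nsmul_eq_mul, sum_fiber_card e₁ ee]

lemma fiber_count {m k : ℕ} (ee : Fin 1 ↪ Fin m) :
    (Finset.univ.filter
      (fun p : (Fin k ↪ Fin m) × (Fin 1 ↪ Fin k) => p.2.trans p.1 = ee)).card *
      Fintype.card (Fin 1 ↪ Fin m)
    = Fintype.card (Fin k ↪ Fin m) * Fintype.card (Fin 1 ↪ Fin k) := by
  classical
  have h1 : (Finset.univ : Finset ((Fin k ↪ Fin m) × (Fin 1 ↪ Fin k))).card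
      = ∑ e₁ : Fin 1 ↪ Fin m, (Finset.univ.filter
          (fun p : (Fin k ↪ Fin m) × (Fin 1 ↪ Fin k) => p.2.trans p.1 = e₁)).card :=
    Finset.card_eq_sum_card_fiberwise (fun p _ => Finset.mem_univ _)
  have h2 : ∑ e₁ : Fin 1 ↪ Fin m, (Finset.univ.filter
        (fun p : (Fin k ↪ Fin m) × (Fin 1 ↪ Fin k) => p.2.trans p.1 = e₁)).card
      = ∑ _e₁ : Fin 1 ↪ Fin m, (Finset.univ.filter
          (fun p : (Fin k ↪ Fin m) × (Fin 1 ↪ Fin k) => p.2.trans p.1 = ee)).card :=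
    Finset.sum_congr rfl (fun e₁ _ => sum_fiber_card e₁ ee)
  have h3 := h1.trans h2
  rw [Finset.sum_const, Finset.card_univ, smul_eq_mul, Finset.card_univ,
    Fintype.card_prod] at h3
  exact (Nat.mul_comm _ _).trans h3.symm


set_option maxHeartbeats 1000000 in
lemma TE_tower {F : Type*} [Field F] [Fintype F] {n : ℕ} (hn : 0 < n) {k : ℕ} (hk : 0 < k)
    (C : Set (Fin n → F)) (x : (Fin (k+1) → Fin n) → F) :
    (∑ e : Fin k ↪ Fin (k+1), ∑ Y : Fin (k+1) → Fin n,
        flatTestE C k 1 (flatRestrict x e Y)) /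
      ((Fintype.card (Fin k ↪ Fin (k+1)) : ℝ) * (Fintype.card (Fin (k+1) → Fin n) : ℝ))
    = flatTestE C (k+1) 1 x := by
  classical
  haveI : Nonempty (Fin n) := ⟨⟨0, hn⟩⟩
  haveI h1 : Nonempty (Fin 1 ↪ Fin k) := ⟨castEmb hk⟩
  haveI h2 : Nonempty (Fin k ↪ Fin (k+1)) := ⟨castEmb (Nat.le_succ k)⟩
  haveI h3 : Nonempty (Fin 1 ↪ Fin (k+1)) := ⟨castEmb (by omega)⟩
  set ee : Fin 1 ↪ Fin (k+1) := castEmb (by omega) with hee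
  have hnum : (∑ e : Fin k ↪ Fin (k+1), ∑ Y : Fin (k+1) → Fin n,
        ∑ f : Fin 1 ↪ Fin k, ∑ z : Fin k → Fin n,
        distTo (flatRestrict x (f.trans e) (merge e Y z)) (tensorPow C 1))
      = (Fintype.card (Fin k → Fin n) : ℝ) *
        (((Finset.univ.filter
            (fun p : (Fin k ↪ Fin (k+1)) × (Fin 1 ↪ Fin k) => p.2.trans p.1 = ee)).card : ℝ) *
          ∑ e₁ : Fin 1 ↪ Fin (k+1), ∑ W : Fin (k+1) → Fin n,
            distTo (flatRestrict x e₁ W) (tensorPow C 1)) := by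
    calc ∑ e : Fin k ↪ Fin (k+1), ∑ Y : Fin (k+1) → Fin n,
          ∑ f : Fin 1 ↪ Fin k, ∑ z : Fin k → Fin n,
          distTo (flatRestrict x (f.trans e) (merge e Y z)) (tensorPow C 1)
        = ∑ e : Fin k ↪ Fin (k+1), ∑ f : Fin 1 ↪ Fin k, ∑ Y : Fin (k+1) → Fin n,
          ∑ z : Fin k → Fin n,
          distTo (flatRestrict x (f.trans e) (merge e Y z)) (tensorPow C 1) :=
          Finset.sum_congr rfl fun e _ => Finset.sum_comm
      _ = ∑ e : Fin k ↪ Fin (k+1), ∑ f : Fin 1 ↪ Fin k,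
          (Fintype.card (Fin k → Fin n) : ℝ) *
            ∑ W : Fin (k+1) → Fin n,
              distTo (flatRestrict x (f.trans e) W) (tensorPow C 1) :=
          Finset.sum_congr rfl fun e _ => Finset.sum_congr rfl fun f _ =>
            sum_merge e (fun W => distTo (flatRestrict x (f.trans e) W) (tensorPow C 1))
      _ = (Fintype.card (Fin k → Fin n) : ℝ) *
          ∑ e : Fin k ↪ Fin (k+1), ∑ f : Fin 1 ↪ Fin k,
            ∑ W : Fin (k+1) → Fin n,
              distTo (flatRestrict x (f.trans e) W) (tensorPow C 1) := by
          rw [Finset.mul_sum]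
          exact Finset.sum_congr rfl fun e _ => (Finset.mul_sum _ _ _).symm
      _ = (Fintype.card (Fin k → Fin n) : ℝ) *
          (((Finset.univ.filter
              (fun p : (Fin k ↪ Fin (k+1)) × (Fin 1 ↪ Fin k) => p.2.trans p.1 = ee)).card : ℝ) *
            ∑ e₁ : Fin 1 ↪ Fin (k+1), ∑ W : Fin (k+1) → Fin n,
              distTo (flatRestrict x e₁ W) (tensorPow C 1)) := by
          rw [sum_trans
            (fun e₁ => ∑ W : Fin (k+1) → Fin n,
              distTo (flatRestrict x e₁ W) (tensorPow C 1)) ee]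
  unfold flatTestE
  simp only [flatRestrict_comp]
  simp only [← Finset.sum_div]
  rw [hnum]
  have hc : (((Finset.univ.filter
      (fun p : (Fin k ↪ Fin (k+1)) × (Fin 1 ↪ Fin k) => p.2.trans p.1 = ee)).card : ℝ) *
        (Fintype.card (Fin 1 ↪ Fin (k+1)) : ℝ))
      = (Fintype.card (Fin k ↪ Fin (k+1)) : ℝ) * (Fintype.card (Fin 1 ↪ Fin k) : ℝ) := by
    exact_mod_cast fiber_count (k := k) ee
  have hN' : (0:ℝ) < (Fintype.card (Fin k → Fin n) : ℝ) := by
    exact_mod_cast Fintype.card_pos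
  have hN : (0:ℝ) < (Fintype.card (Fin (k+1) → Fin n) : ℝ) := by
    exact_mod_cast Fintype.card_pos
  have hBc : (0:ℝ) < (Fintype.card (Fin 1 ↪ Fin k) : ℝ) := by
    exact_mod_cast Fintype.card_pos
  have hA : (0:ℝ) < (Fintype.card (Fin k ↪ Fin (k+1)) : ℝ) := by
    exact_mod_cast Fintype.card_pos
  have hmc : (0:ℝ) < (Fintype.card (Fin 1 ↪ Fin (k+1)) : ℝ) := by
    exact_mod_cast Fintype.card_pos
  set c0 := ((Finset.univ.filter
      (fun p : (Fin k ↪ Fin (k+1)) × (Fin 1 ↪ Fin k) => p.2.trans p.1 = ee)).card : ℝ)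
  set S1 := ∑ e₁ : Fin 1 ↪ Fin (k+1), ∑ W : Fin (k+1) → Fin n,
      distTo (flatRestrict x e₁ W) (tensorPow C 1)
  set A := (Fintype.card (Fin k ↪ Fin (k+1)) : ℝ)
  set N := (Fintype.card (Fin (k+1) → Fin n) : ℝ)
  set Bc := (Fintype.card (Fin 1 ↪ Fin k) : ℝ)
  set N' := (Fintype.card (Fin k → Fin n) : ℝ)
  set mc := (Fintype.card (Fin 1 ↪ Fin (k+1)) : ℝ)
  rw [div_div, div_eq_div_iff (by positivity) (by positivity)]
  linear_combination (N' * N * S1) * hc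


lemma chain {F : Type*} [Field F] [Fintype F] {n : ℕ} (hn : 0 < n) {k : ℕ} (hk : 0 < k)
    (C : Set (Fin n → F)) (x : (Fin (k+1) → Fin n) → F) :
    flatRobustConst C (k+1) k * flatRobustConst C k 1 * distTo x (tensorPow C (k+1))
      ≤ flatTestE C (k+1) 1 x := by
  haveI : Nonempty (Fin n) := ⟨⟨0, hn⟩⟩
  haveI h2 : Nonempty (Fin k ↪ Fin (k+1)) := ⟨castEmb (Nat.le_succ k)⟩
  have ha := robust_spec C (k+1) k x
  have hb0 : 0 ≤ flatRobustConst C k 1 := robust_nonneg C k 1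
  have step1 : flatRobustConst C (k+1) k * flatRobustConst C k 1 * distTo x (tensorPow C (k+1))
      ≤ flatRobustConst C k 1 * flatTestE C (k+1) k x := by
    calc flatRobustConst C (k+1) k * flatRobustConst C k 1 * distTo x (tensorPow C (k+1))
        = flatRobustConst C k 1 *
            (flatRobustConst C (k+1) k * distTo x (tensorPow C (k+1))) := by ring
      _ ≤ flatRobustConst C k 1 * flatTestE C (k+1) k x :=
          mul_le_mul_of_nonneg_left ha hb0
  refine step1.trans ?_
  rw [← TE_tower hn hk C x]
  have hTE : flatTestE C (k+1) k x
      = (∑ e : Fin k ↪ Fin (k+1), ∑ Y : Fin (k+1) → Fin n,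
          distTo (flatRestrict x e Y) (tensorPow C k)) /
        ((Fintype.card (Fin k ↪ Fin (k+1)) : ℝ) * (Fintype.card (Fin (k+1) → Fin n) : ℝ)) :=
    rfl
  rw [hTE]
  have hA : (0:ℝ) < (Fintype.card (Fin k ↪ Fin (k+1)) : ℝ) := by
    exact_mod_cast Fintype.card_pos
  have hN : (0:ℝ) < (Fintype.card (Fin (k+1) → Fin n) : ℝ) := by
    exact_mod_cast Fintype.card_pos
  rw [← mul_div_assoc, div_le_div_iff_of_pos_right (mul_pos hA hN)]
  rw [Finset.mul_sum]
  apply Finset.sum_le_sum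
  intro e _
  rw [Finset.mul_sum]
  apply Finset.sum_le_sum
  intro Y _
  exact robust_spec C k 1 (flatRestrict x e Y)

lemma step_le {F : Type*} [Field F] [Fintype F] {n : ℕ} (hn : 0 < n) {k : ℕ} (hk : 0 < k)
    (C : Set (Fin n → F)) (x₀ : (Fin (k+1) → Fin n) → F)
    (hx₀ : 0 < distTo x₀ (tensorPow C (k+1))) :
    flatRobustConst C (k+1) k * flatRobustConst C k 1 ≤ flatRobustConst C (k+1) 1 := by
  apply le_csSup
  · exact ⟨flatTestE C (k+1) 1 x₀ / distTo x₀ (tensorPow C (k+1)),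
      fun α hα => (le_div_iff₀ hx₀).mpr (hα x₀)⟩
  · exact fun x => chain hn hk C x

lemma lift_witness {F : Type*} [Field F] [Fintype F] {n : ℕ} (hn : 0 < n)
    {C : Set (Fin n → F)} (h0 : (0 : Fin n → F) ∈ C) {m : ℕ} (hm : 2 ≤ m)
    {x₂ : (Fin 2 → Fin n) → F} (h2 : 0 < distTo x₂ (tensorPow C 2)) :
    ∃ x : (Fin m → Fin n) → F, 0 < distTo x (tensorPow C m) := by
  haveI : Nonempty (Fin n) := ⟨⟨0, hn⟩⟩
  have hx₂ : x₂ ∉ tensorPow C 2 := by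
    intro hmem
    have hle := distTo_le x₂ hmem
    rw [sub_self, normWt_zero] at hle
    linarith
  refine ⟨fun y => x₂ (fun t => y (Fin.castLE hm t)), ?_⟩
  apply distTo_pos Fintype.card_pos ⟨0, zero_mem_tensorPow h0 m⟩
  intro hx
  apply hx₂
  intro i y₂
  have hkey := hx (Fin.castLE hm i)
    (fun j => if h : (j : ℕ) < 2 then y₂ ⟨(j : ℕ), h⟩ else y₂ 0)
  have heq : (fun s => x₂ (Function.update y₂ i s))
      = (fun s => (fun y => x₂ (fun t => y (Fin.castLE hm t)))
          (Function.update
            (fun j : Fin m => if h : (j : ℕ) < 2 then y₂ ⟨(j : ℕ), h⟩ else y₂ 0)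
            (Fin.castLE hm i) s)) := by
    funext s
    congr 1
    funext t
    rw [Function.update_apply, Function.update_apply]
    by_cases ht : t = i
    · subst ht
      rw [if_pos rfl, if_pos rfl]
    · rw [if_neg ht, if_neg (fun hc => ht (Fin.castLE_injective hm hc))]
      rw [dif_pos (show ((Fin.castLE hm t : Fin m) : ℕ) < 2 from t.isLt)]
      exact (congrArg y₂ (Fin.ext rfl)).symm
  rw [heq]
  exact hkey

lemma rho2_zero {F : Type*} [Field F] [Fintype F] {n : ℕ} (C : Set (Fin n → F))
    (hall : ∀ x₂ : (Fin 2 → Fin n) → F, distTo x₂ (tensorPow C 2) = 0) :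
    flatRobustConst C 2 1 = 0 := by
  have hset : {α : ℝ | ∀ x : (Fin 2 → Fin n) → F,
      α * distTo x (tensorPow C 2) ≤ flatTestE C 2 1 x} = Set.univ := by
    ext α
    simp only [Set.mem_setOf_eq, Set.mem_univ, iff_true]
    intro x
    rw [hall x, mul_zero]
    exact flatTestE_nonneg _ _ _ _
  unfold flatRobustConst
  rw [hset, Real.sSup_univ]

lemma Mstep {j : ℕ} (hj : 2 ≤ j) :
    ((j+1)-2) * ((j+1)+3) / 2 = (j-2)*(j+3)/2 + (j+1) := by
  obtain ⟨i, rfl⟩ : ∃ i, j = i + 2 := ⟨j - 2, by omega⟩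
  have e1 : (i + 2 + 1) - 2 = i + 1 := by omega
  have e2 : (i + 2) - 2 = i := by omega
  have e3 : (i + 2 + 1) + 3 = i + 6 := by omega
  have e4 : (i + 2) + 3 = i + 5 := by omega
  rw [e1, e2, e3, e4]
  have h1 : (i+1) * (i+6) = i*(i+5) + 2*(i+3) := by ring
  rw [h1, Nat.add_mul_div_left _ _ (by norm_num : (0:ℕ) < 2)]

lemma minDist_zero_of_n_zero {F : Type*} [Zero F] (S : Set (Fin 0 → F)) :
    minDist S = 0 := by
  have h : S \ {0} = ∅ := by
    ext c
    simp only [Set.mem_diff, Set.mem_singleton_iff, Set.mem_empty_iff_false, iff_false,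
      not_and, not_not]
    intro _
    funext p
    exact p.elim0
  rw [minDist, h, Set.image_empty, Real.sInf_empty]

end Stmt7

/-- `ρ_r(T_m^1, C^{⊗m}) ≥ 12^{-(m-2)} · ρ_r(T_2^1, C^{⊗2}) · δ(C)^M`
with `M = (m-2)(m+3)/2`, given the hyperplane-test bound of Chiesa–Manohar–Shinkar. -/
theorem stmt_7 {F : Type*} [Field F] [Fintype F] {n : ℕ} (C : Submodule F (Fin n → F))
    (m : ℕ) (hm : 2 ≤ m)
    (hCMS : ∀ k, 3 ≤ k → k ≤ m →
      (1 / 12 : ℝ) * minDist (C : Set (Fin n → F)) ^ k ≤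
        flatRobustConst (C : Set (Fin n → F)) k (k - 1)) :
    (1 / (12 : ℝ) ^ (m - 2)) * flatRobustConst (C : Set (Fin n → F)) 2 1 *
        minDist (C : Set (Fin n → F)) ^ ((m - 2) * (m + 3) / 2) ≤
      flatRobustConst (C : Set (Fin n → F)) m 1 := by
  by_cases hm2 : m = 2
  · subst hm2
    norm_num
  have hm3 : 3 ≤ m := by omega
  have h0 : (0 : Fin n → F) ∈ (C : Set (Fin n → F)) := C.zero_mem
  have hρm : 0 ≤ flatRobustConst (C : Set (Fin n → F)) m 1 := Stmt7.robust_nonneg _ _ _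
  rcases Nat.eq_zero_or_pos n with hn0 | hn
  · subst hn0
    rw [Stmt7.minDist_zero_of_n_zero (C : Set (Fin 0 → F))]
    rw [zero_pow ?hM]
    case hM =>
      have h6 : 6 ≤ (m-2)*(m+3) := calc
        6 = 1*6 := by norm_num
        _ ≤ (m-2)*(m+3) := Nat.mul_le_mul (by omega) (by omega)
      omega
    rw [mul_zero]
    exact hρm
  by_cases hall : ∀ x₂ : (Fin 2 → Fin n) → F,
      distTo x₂ (tensorPow (C : Set (Fin n → F)) 2) = 0
  · rw [Stmt7.rho2_zero _ hall, mul_zero, zero_mul]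
    exact hρm
  push_neg at hall
  obtain ⟨x₂, hx₂⟩ := hall
  have hx₂pos : 0 < distTo x₂ (tensorPow (C : Set (Fin n → F)) 2) :=
    (Stmt7.distTo_nonneg _ _).lt_of_ne (Ne.symm hx₂)
  have main : ∀ j, 2 ≤ j → j ≤ m →
      (1 / (12:ℝ) ^ (j-2)) * flatRobustConst (C : Set (Fin n → F)) 2 1 *
          minDist (C : Set (Fin n → F)) ^ ((j-2)*(j+3)/2)
        ≤ flatRobustConst (C : Set (Fin n → F)) j 1 := by
    intro j hj
    induction j, hj using Nat.le_induction with
    | base => intro _; norm_num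
    | succ j hj IH =>
      intro hjm
      have IH' := IH (by omega)
      have hδ : 0 ≤ minDist (C : Set (Fin n → F)) := Stmt7.minDist_nonneg _
      have hcoef : 0 ≤ (1/12 : ℝ) * minDist (C : Set (Fin n → F)) ^ (j+1) := by positivity
      have hCMSj := hCMS (j+1) (by omega) hjm
      have hsub : (j+1) - 1 = j := by omega
      rw [hsub] at hCMSj
      have hρj : 0 ≤ flatRobustConst (C : Set (Fin n → F)) j 1 := Stmt7.robust_nonneg _ _ _
      obtain ⟨x₀, hx₀⟩ := Stmt7.lift_witness hn h0 (show 2 ≤ j+1 by omega) hx₂pos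
      have hstep := Stmt7.step_le hn (show 0 < j by omega) (C : Set (Fin n → F)) x₀ hx₀
      have hexp12 : (j+1) - 2 = (j-2) + 1 := by omega
      have harith : (1 / (12:ℝ) ^ ((j+1)-2)) * flatRobustConst (C : Set (Fin n → F)) 2 1 *
          minDist (C : Set (Fin n → F)) ^ (((j+1)-2)*((j+1)+3)/2)
          = ((1/12 : ℝ) * minDist (C : Set (Fin n → F)) ^ (j+1)) *
            ((1 / (12:ℝ) ^ (j-2)) * flatRobustConst (C : Set (Fin n → F)) 2 1 *
              minDist (C : Set (Fin n → F)) ^ ((j-2)*(j+3)/2)) := by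
        rw [Stmt7.Mstep hj, hexp12, pow_succ, pow_add]
        ring
      rw [harith]
      calc ((1/12 : ℝ) * minDist (C : Set (Fin n → F)) ^ (j+1)) *
            ((1 / (12:ℝ) ^ (j-2)) * flatRobustConst (C : Set (Fin n → F)) 2 1 *
              minDist (C : Set (Fin n → F)) ^ ((j-2)*(j+3)/2))
          ≤ ((1/12 : ℝ) * minDist (C : Set (Fin n → F)) ^ (j+1)) *
              flatRobustConst (C : Set (Fin n → F)) j 1 :=
            mul_le_mul_of_nonneg_left IH' hcoef
        _ ≤ flatRobustConst (C : Set (Fin n → F)) (j+1) j *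
              flatRobustConst (C : Set (Fin n → F)) j 1 :=
            mul_le_mul_of_nonneg_right hCMSj hρj
        _ ≤ flatRobustConst (C : Set (Fin n → F)) (j+1) 1 := hstep
  exact main m hm le_rfl


end
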